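/- Fix ℓ > 0 and α ∈ (0, π/2). On the interval of parameters θ ∈ (arctan(2ℓ + tan α), π/2), the function θ ↦ ρ(F_{ℓ,α,θ}) is continuous and non-increasing. -/

import Mathlib

open Real Filter Set
open Topology

/-- Rotation number of a lift `T` of a circle homeomorphism,
defined as the limit of `T^[n] 0 / n` (which exists and is independent
of the base point for lifts of orientation-preserving circle homeos). -/
noncomputable def rotationNumber (T : ℝ → ℝ) : ℝ :=
  limUnder atTop (fun n : ℕ => T^[n] 0 / (n : ℝ))

/-- The expansion factor `Λ = sin(θ+α)/sin(θ−α)`. -/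
noncomputable def Lam (α θ : ℝ) : ℝ := Real.sin (θ + α) / Real.sin (θ - α)

/-- The break point of increase `a₀ = (tan θ − 2ℓ)/(2 tan θ)`. -/
noncomputable def brk0 (ℓ θ : ℝ) : ℝ := (Real.tan θ - 2 * ℓ) / (2 * Real.tan θ)

/-- The break point of decrease `a₁ = −(2ℓ + tan α)/(2 tan θ)`. -/
noncomputable def brk1 (ℓ α θ : ℝ) : ℝ := -(2 * ℓ + Real.tan α) / (2 * Real.tan θ)

/-- The two-piece definition of the lift on the fundamental interval `[a₁, a₁+1)`. -/
noncomputable def Ftrap0 (ℓ α θ x : ℝ) : ℝ :=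
  if x ≤ brk0 ℓ θ then -brk1 ℓ α θ + (Lam α θ)⁻¹ * (x - brk1 ℓ α θ)
  else 1 - brk0 ℓ θ + Lam α θ * (x - brk0 ℓ θ)

/-- The lift `F_{ℓ,α,θ} : ℝ → ℝ` of the Poincaré map of the internal-wave
billiard in a rectangular trapezoid: it is given by the two-piece formula on
`[a₁, a₁+1)` and extended by `F(x+k) = F(x)+k` for `k ∈ ℤ`. -/
noncomputable def Ftrap (ℓ α θ x : ℝ) : ℝ :=
  Ftrap0 ℓ α θ (x - ⌊x - brk1 ℓ α θ⌋) + ⌊x - brk1 ℓ α θ⌋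

namespace Stmt7

noncomputable def uu (ℓ α θ x : ℝ) : ℝ := -brk1 ℓ α θ + (Lam α θ)⁻¹ * (x - brk1 ℓ α θ)
noncomputable def vv (ℓ α θ x : ℝ) : ℝ := 1 - brk0 ℓ θ + Lam α θ * (x - brk0 ℓ θ)

structure Good (ℓ α θ : ℝ) : Prop where
  hl : 0 < ℓ
  hA : 0 < Real.tan α
  hT : 2 * ℓ + Real.tan α < Real.tan θ
  hLam : Lam α θ = (Real.tan θ + Real.tan α) / (Real.tan θ - Real.tan α)

variable {ℓ α θ : ℝ}

lemma good_of_mem {ℓ α θ : ℝ} (hℓ : 0 < ℓ) (hα : 0 < α) (hα2 : α < π / 2)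
    (hθ : θ ∈ Set.Ioo (Real.arctan (2 * ℓ + Real.tan α)) (π / 2)) : Good ℓ α θ := by
  obtain ⟨h1, h2⟩ := hθ
  have hA : 0 < Real.tan α := Real.tan_pos_of_pos_of_lt_pi_div_two hα hα2
  have hc : 0 < 2 * ℓ + Real.tan α := by linarith
  have harc : 0 < Real.arctan (2 * ℓ + Real.tan α) := by
    have := Real.arctan_strictMono hc; simpa using this
  have hθ0 : 0 < θ := harc.trans h1
  have hT : 2 * ℓ + Real.tan α < Real.tan θ := by
    have := Real.tan_lt_tan_of_lt_of_lt_pi_div_two (Real.neg_pi_div_two_lt_arctan _) h2 h1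
    rwa [Real.tan_arctan] at this
  have hαθ : α < θ := by
    have : α < Real.arctan (2 * ℓ + Real.tan α) := by
      have := Real.arctan_strictMono (a := Real.tan α) (b := 2 * ℓ + Real.tan α) (by linarith)
      rwa [Real.arctan_tan (by linarith [Real.pi_pos]) hα2] at this
    linarith
  have hcosθ : 0 < Real.cos θ := Real.cos_pos_of_mem_Ioo ⟨by linarith [Real.pi_pos], h2⟩
  have hcosα : 0 < Real.cos α := Real.cos_pos_of_mem_Ioo ⟨by linarith [Real.pi_pos], hα2⟩
  have hLam : Lam α θ = (Real.tan θ + Real.tan α) / (Real.tan θ - Real.tan α) := by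
    rw [Lam, Real.sin_add, Real.sin_sub, Real.tan_eq_sin_div_cos, Real.tan_eq_sin_div_cos]
    have hsd : Real.sin θ * Real.cos α - Real.cos θ * Real.sin α ≠ 0 := by
      have h0 : 0 < θ - α := by linarith
      have h1' : θ - α < π := by linarith [Real.pi_pos, hα]
      have := Real.sin_pos_of_pos_of_lt_pi h0 h1'
      rw [Real.sin_sub] at this; linarith
    field_simp
  exact ⟨hℓ, hA, hT, hLam⟩

namespace Good
variable (G : Good ℓ α θ)
include G

lemma hT0 : 0 < Real.tan θ := by have := G.hl; have := G.hA; have := G.hT; linarith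
lemma hTA : Real.tan α < Real.tan θ := by have := G.hl; have := G.hT; linarith
lemma hLam1 : 1 < Lam α θ := by
  rw [G.hLam]
  have h1 : 0 < Real.tan θ - Real.tan α := by linarith [G.hTA]
  rw [lt_div_iff₀ h1]; have := G.hA; linarith
lemma hLam0 : 0 < Lam α θ := by linarith [G.hLam1]
lemma hLaminv1 : (Lam α θ)⁻¹ < 1 := by
  rw [inv_lt_one_iff₀]; right; exact G.hLam1
lemma hLaminv0 : 0 < (Lam α θ)⁻¹ := inv_pos.mpr G.hLam0
lemma ha0pos : 0 < brk0 ℓ θ := by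
  have := G.hT0; have := G.hT; have := G.hA
  rw [brk0]; apply div_pos <;> linarith
lemma ha0half : brk0 ℓ θ < 1/2 := by
  have h := G.hT0; have := G.hl
  rw [brk0, div_lt_iff₀ (by linarith : (0:ℝ) < 2 * Real.tan θ)]; linarith
lemma ha1neg : brk1 ℓ α θ < 0 := by
  have := G.hT0; have := G.hA; have := G.hl
  rw [brk1]
  apply div_neg_of_neg_of_pos <;> linarith
lemma ha1half : -(1/2) < brk1 ℓ α θ := by
  have h := G.hT0; have := G.hT
  rw [brk1, lt_div_iff₀ (by linarith : (0:ℝ) < 2 * Real.tan θ)]; linarith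
lemma key1 : uu ℓ α θ (brk0 ℓ θ) = 1 - brk0 ℓ θ := by
  have hT0 := G.hT0
  have h1 : 0 < Real.tan θ - Real.tan α := by linarith [G.hTA]
  have h2 : 0 < Real.tan θ + Real.tan α := by have := G.hA; linarith
  rw [uu, brk0, brk1, G.hLam]
  field_simp
  ring
lemma key2 : vv ℓ α θ (brk1 ℓ α θ + 1) = 1 - brk1 ℓ α θ := by
  have hT0 := G.hT0
  have h1 : 0 < Real.tan θ - Real.tan α := by linarith [G.hTA]
  have h2 : 0 < Real.tan θ + Real.tan α := by have := G.hA; linarith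
  rw [vv, brk0, brk1, G.hLam]
  field_simp
  ring
lemma uu_sub_vv (x : ℝ) :
    uu ℓ α θ x - vv ℓ α θ x = ((Lam α θ)⁻¹ - Lam α θ) * (x - brk0 ℓ θ) := by
  have k1 := G.key1
  rw [uu, vv] at *
  nlinarith [k1]
lemma vv_le_uu {x : ℝ} (hx : x ≤ brk0 ℓ θ) : vv ℓ α θ x ≤ uu ℓ α θ x := by
  have h := G.uu_sub_vv x
  have h1 := G.hLam1; have h2 := G.hLaminv1; have h3 := G.hLaminv0
  nlinarith
lemma uu_le_vv {x : ℝ} (hx : brk0 ℓ θ ≤ x) : uu ℓ α θ x ≤ vv ℓ α θ x := by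
  have h := G.uu_sub_vv x
  have h1 := G.hLam1; have h2 := G.hLaminv1; have h3 := G.hLaminv0
  nlinarith
lemma Ftrap0_eq (x : ℝ) : Ftrap0 ℓ α θ x = max (uu ℓ α θ x) (vv ℓ α θ x) := by
  rw [Ftrap0]
  split_ifs with h
  · rw [max_eq_left (G.vv_le_uu h), uu]
  · rw [max_eq_right (G.uu_le_vv (le_of_not_ge h)), vv]
lemma Ftrap0_mono : Monotone (Ftrap0 ℓ α θ) := by
  intro x y hxy
  rw [G.Ftrap0_eq, G.Ftrap0_eq]
  have h1 := G.hLam0; have h2 := G.hLaminv0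
  apply max_le_max
  · rw [uu, uu]; nlinarith
  · rw [vv, vv]; nlinarith


-- value lemmas
lemma Ftrap0_a1 : Ftrap0 ℓ α θ (brk1 ℓ α θ) = -brk1 ℓ α θ := by
  rw [G.Ftrap0_eq, max_eq_left (G.vv_le_uu (le_of_lt (G.ha1neg.trans G.ha0pos))), uu]
  ring
lemma Ftrap0_a1' : Ftrap0 ℓ α θ (brk1 ℓ α θ + 1) = 1 - brk1 ℓ α θ := by
  have h : brk0 ℓ θ ≤ brk1 ℓ α θ + 1 := by
    have := G.ha0half; have := G.ha1half; linarith
  rw [G.Ftrap0_eq, max_eq_right (G.uu_le_vv h), G.key2]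

lemma Ftrap_floor {x : ℝ} {n : ℤ} (hn : (n:ℝ) ≤ x - brk1 ℓ α θ)
    (hn2 : x - brk1 ℓ α θ < n + 1) : Ftrap ℓ α θ x = Ftrap0 ℓ α θ (x - n) + n := by
  have : ⌊x - brk1 ℓ α θ⌋ = n := Int.floor_eq_iff.mpr ⟨hn, hn2⟩
  rw [Ftrap, this]
omit G

lemma Ftrap_add_int (ℓ α θ : ℝ) (x : ℝ) (k : ℤ) :
    Ftrap ℓ α θ (x + k) = Ftrap ℓ α θ x + k := by
  have h1 : x + (k:ℝ) - brk1 ℓ α θ = (x - brk1 ℓ α θ) + k := by ring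
  rw [Ftrap, Ftrap, h1, Int.floor_add_intCast]
  push_cast
  ring_nf

include G
lemma Ftrap_mono : Monotone (Ftrap ℓ α θ) := by
  intro x y hxy
  set a1 := brk1 ℓ α θ with ha1
  have hmn : ⌊x - a1⌋ ≤ ⌊y - a1⌋ := Int.floor_le_floor (by linarith)
  rw [Ftrap, Ftrap, ← ha1]
  rcases eq_or_lt_of_le hmn with h | h
  · rw [← h]
    have := G.Ftrap0_mono (by gcongr : x - (⌊x - a1⌋:ℝ) ≤ y - (⌊x - a1⌋:ℝ))
    linarith
  · have h1 : x - (⌊x - a1⌋:ℝ) ≤ a1 + 1 := by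
      have := Int.lt_floor_add_one (x - a1); linarith
    have h2 : a1 ≤ y - (⌊y - a1⌋:ℝ) := by
      have := Int.floor_le (y - a1); linarith
    have e1 : Ftrap0 ℓ α θ (x - ⌊x - a1⌋) ≤ 1 - a1 := by
      rw [← G.Ftrap0_a1']; exact G.Ftrap0_mono h1
    have e2 : -a1 ≤ Ftrap0 ℓ α θ (y - ⌊y - a1⌋) := by
      rw [← G.Ftrap0_a1]; exact G.Ftrap0_mono h2
    have : (⌊x - a1⌋:ℝ) + 1 ≤ (⌊y - a1⌋:ℝ) := by exact_mod_cast h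
    linarith

lemma Ftrap_min {x : ℝ} {n : ℤ} (h1 : brk1 ℓ α θ + n < x) (h2 : x < brk1 ℓ α θ + n + 2) :
    Ftrap ℓ α θ x
      = min (Ftrap0 ℓ α θ (x - n) + n) (Ftrap0 ℓ α θ (x - (n+1)) + (n+1)) := by
  have hL1 := G.hLam1; have hI0 := G.hLaminv0; have hI1 := G.hLaminv1
  have hk2 := G.key2
  have ha1n := G.ha1neg; have ha0p := G.ha0pos
  set a1 := brk1 ℓ α θ with ha1
  set a0 := brk0 ℓ θ with ha0
  set L := Lam α θ with hLdef
  set I := L⁻¹ with hIdef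
  rcases lt_or_ge x (a1 + n + 1) with hc | hc
  · rw [G.Ftrap_floor (n := n) (by push_cast; linarith) (by push_cast; linarith)]
    have key : Ftrap0 ℓ α θ (x - n) ≤ Ftrap0 ℓ α θ (x - (n+1)) + 1 := by
      have hu : Ftrap0 ℓ α θ (x - (n+1)) = uu ℓ α θ (x - (n+1)) := by
        rw [G.Ftrap0_eq]
        exact max_eq_left (G.vv_le_uu (by push_cast; linarith))
      rw [G.Ftrap0_eq, hu]
      apply max_le
      · rw [uu, uu]; push_cast; nlinarith
      · rw [uu, vv]; rw [vv] at hk2; push_cast; nlinarith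
    rw [min_eq_left (by push_cast; push_cast at key; linarith)]
  · rw [G.Ftrap_floor (n := n+1) (by push_cast; linarith) (by push_cast; linarith)]
    have key : Ftrap0 ℓ α θ (x - (n+1)) + 1 ≤ Ftrap0 ℓ α θ (x - n) := by
      have hv : vv ℓ α θ (x - n) ≤ Ftrap0 ℓ α θ (x - n) := by
        rw [G.Ftrap0_eq]; exact le_max_right _ _
      refine le_trans ?_ hv
      rw [G.Ftrap0_eq, ← max_add_add_right]
      apply max_le
      · rw [uu, vv]; rw [vv] at hk2; push_cast; nlinarith
      · rw [vv, vv]; push_cast; nlinarith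
    rw [min_eq_right (by push_cast; push_cast at key; linarith)]
    push_cast
    ring

end Good

variable {ℓ α θ θ' : ℝ}

section Alg
variable {a0 a0' a1 a1' L L' I I' y : ℝ}

lemma alg1 (h00 : a0 ≤ a0') (hI : I ≤ I') (hI0 : 0 ≤ I) (hI1 : I' ≤ 1)
    (k1 : -a1 + I * (a0 - a1) = 1 - a0) (k1' : -a1' + I' * (a0' - a1') = 1 - a0')
    (hy : y ≤ a0) :
    -a1' + I' * (y - a1') ≤ -a1 + I * (y - a1) := by
  nlinarith [mul_nonneg (sub_nonneg.mpr hI) (sub_nonneg.mpr hy),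
    mul_nonneg (hI0.trans hI) (sub_nonneg.mpr h00)]

lemma alg2 (hI0' : 0 ≤ I') (hL0 : 0 ≤ L)
    (k1' : -a1' + I' * (a0' - a1') = 1 - a0')
    (hy1 : a0 ≤ y) (hy2 : y ≤ a0') :
    -a1' + I' * (y - a1') ≤ 1 - a0 + L * (y - a0) := by
  nlinarith [mul_nonneg hI0' (sub_nonneg.mpr hy2), mul_nonneg hL0 (sub_nonneg.mpr hy1)]

lemma alg3 (hLL : L' ≤ L) (hL0 : 0 ≤ L) (h00 : a0 ≤ a0') (hy : a0' ≤ y) :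
    1 - a0' + L' * (y - a0') ≤ 1 - a0 + L * (y - a0) := by
  nlinarith [mul_nonneg (sub_nonneg.mpr hLL) (sub_nonneg.mpr hy),
    mul_nonneg hL0 (sub_nonneg.mpr h00)]

lemma alg4 (hI0 : 0 ≤ I) (hIL : I ≤ L') (h01 : a1 ≤ a1')
    (k2' : 1 - a0' + L' * (a1' + 1 - a0') = 1 - a1') (hy : y ≤ a1' + 1) :
    1 - a0' + L' * (y - a0') ≤ -a1 + I * (y - 1 - a1) + 1 := by
  nlinarith [mul_nonneg (sub_nonneg.mpr hIL) (sub_nonneg.mpr hy),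
    mul_nonneg hI0 (sub_nonneg.mpr h01)]

end Alg


lemma Ftrap_anti_pt (G : Good ℓ α θ) (G' : Good ℓ α θ')
    (hTT : Real.tan θ ≤ Real.tan θ') (x : ℝ) :
    Ftrap ℓ α θ' x ≤ Ftrap ℓ α θ x := by
  have hT0 := G.hT0; have hT0' := G'.hT0
  have hA := G.hA
  -- parameter comparisons
  have h01 : brk1 ℓ α θ ≤ brk1 ℓ α θ' := by
    rw [brk1, brk1, div_le_div_iff₀ (by linarith) (by linarith)]
    nlinarith [G.hl]
  have h00 : brk0 ℓ θ ≤ brk0 ℓ θ' := by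
    rw [brk0, brk0, div_le_div_iff₀ (by linarith) (by linarith)]
    nlinarith [G.hl]
  have hLL : Lam α θ' ≤ Lam α θ := by
    rw [G.hLam, G'.hLam, div_le_div_iff₀ (by linarith [G'.hTA]) (by linarith [G.hTA])]
    nlinarith
  have hII : (Lam α θ)⁻¹ ≤ (Lam α θ')⁻¹ := by
    apply inv_anti₀ G'.hLam0 hLL
  -- reduce to fundamental domain of θ'
  set k := ⌊x - brk1 ℓ α θ'⌋ with hk
  have hxy : x = (x - k) + k := by ring
  rw [hxy, Good.Ftrap_add_int, Good.Ftrap_add_int]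
  set y := x - (k:ℝ) with hy
  have hy1 : brk1 ℓ α θ' ≤ y := by
    have := Int.floor_le (x - brk1 ℓ α θ'); rw [hy]; linarith
  have hy2 : y < brk1 ℓ α θ' + 1 := by
    have := Int.lt_floor_add_one (x - brk1 ℓ α θ'); rw [hy]; linarith
  gcongr
  -- now a1' ≤ y < a1' + 1
  have e' : Ftrap ℓ α θ' y = Ftrap0 ℓ α θ' y := by
    rw [G'.Ftrap_floor (n := 0) (by push_cast; linarith) (by push_cast; linarith)]
    push_cast; ring
  rw [e']
  have ha1 := G.ha1neg; have ha1' := G'.ha1neg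
  have ha1h := G.ha1half; have ha1h' := G'.ha1half
  have ha0 := G.ha0pos; have ha0' := G'.ha0pos
  have ha0h := G.ha0half; have ha0h' := G'.ha0half
  have hL1 := G.hLam1; have hL1' := G'.hLam1
  have hI0 := G.hLaminv0; have hI0' := G'.hLaminv0
  have hI1 := G.hLaminv1; have hI1' := G'.hLaminv1
  have hk1 := G.key1; have hk1' := G'.key1
  have hk2 := G.key2; have hk2' := G'.key2
  rcases lt_or_ge y (brk1 ℓ α θ + 1) with hcase | hcase
  · -- same fundamental domain for θ
    have e : Ftrap ℓ α θ y = Ftrap0 ℓ α θ y := by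
      rw [G.Ftrap_floor (n := 0) (by push_cast; linarith) (by push_cast; linarith)]
      push_cast; ring
    rw [e, G.Ftrap0_eq, G'.Ftrap0_eq]
    rcases le_or_gt y (brk0 ℓ θ) with h | h
    · rw [max_eq_left (G.vv_le_uu h)]
      have key_uu : uu ℓ α θ' y ≤ uu ℓ α θ y := by
        rw [uu, uu]; rw [uu] at hk1 hk1'
        exact alg1 h00 hII hI0.le hI1'.le hk1 hk1' h
      exact max_le key_uu ((G'.vv_le_uu (h.trans h00)).trans key_uu)
    · have hvy : vv ℓ α θ y ≤ max (uu ℓ α θ y) (vv ℓ α θ y) := le_max_right _ _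
      refine le_trans ?_ hvy
      rcases le_or_gt y (brk0 ℓ θ') with h' | h'
      · rw [max_eq_left (G'.vv_le_uu h')]
        rw [uu, vv]; rw [uu] at hk1'
        exact alg2 hI0'.le (by linarith) hk1' h.le h'
      · rw [max_eq_right (G'.uu_le_vv h'.le)]
        rw [vv, vv]
        exact alg3 hLL (by linarith) h00 h'.le
  · -- θ-floor is 1
    have e : Ftrap ℓ α θ y = Ftrap0 ℓ α θ (y - 1) + 1 := by
      rw [G.Ftrap_floor (n := 1) (by push_cast; linarith) (by push_cast; linarith)]
      push_cast; ring
    rw [e]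
    have eθ : Ftrap0 ℓ α θ (y - 1) = uu ℓ α θ (y - 1) := by
      rw [G.Ftrap0_eq]
      exact max_eq_left (G.vv_le_uu (by linarith))
    have eθ' : Ftrap0 ℓ α θ' y = vv ℓ α θ' y := by
      rw [G'.Ftrap0_eq]
      exact max_eq_right (G'.uu_le_vv (by linarith))
    rw [eθ, eθ']
    rw [uu, vv]; rw [vv] at hk2'
    exact alg4 (a0' := brk0 ℓ θ') hI0.le (hI1.le.trans hL1'.le) h01 hk2' hy2.le


-- continuity infrastructure
variable (ℓ α) in
noncomputable def Sset : Set ℝ := Set.Ioo (Real.arctan (2 * ℓ + Real.tan α)) (π / 2)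

section Cont
variable (hℓ : 0 < ℓ) (hα : 0 < α) (hα2 : α < π / 2)
include hℓ hα hα2

lemma mem_good {θ : ℝ} (hθ : θ ∈ Sset ℓ α) : Good ℓ α θ :=
  good_of_mem hℓ hα hα2 hθ

lemma theta_pos {θ : ℝ} (hθ : θ ∈ Sset ℓ α) : 0 < θ := by
  have hA : 0 < Real.tan α := Real.tan_pos_of_pos_of_lt_pi_div_two hα hα2
  have harc : 0 < Real.arctan (2 * ℓ + Real.tan α) := by
    have : Real.arctan 0 < Real.arctan (2 * ℓ + Real.tan α) :=
      Real.arctan_strictMono (by linarith)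
    simpa using this
  exact harc.trans hθ.1

lemma cos_ne {θ : ℝ} (hθ : θ ∈ Sset ℓ α) : Real.cos θ ≠ 0 := by
  have := theta_pos hℓ hα hα2 hθ
  exact (Real.cos_pos_of_mem_Ioo ⟨by linarith [Real.pi_pos], hθ.2⟩).ne'

lemma contS_tan : ContinuousOn Real.tan (Sset ℓ α) :=
  Real.continuousOn_tan.mono (fun θ hθ => cos_ne hℓ hα hα2 hθ)

lemma tan_ne {θ : ℝ} (hθ : θ ∈ Sset ℓ α) : Real.tan θ ≠ 0 :=
  (mem_good hℓ hα hα2 hθ).hT0.ne'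

lemma cont_brk0 : ContinuousOn (fun θ => brk0 ℓ θ) (Sset ℓ α) := by
  apply ContinuousOn.div
  · exact (contS_tan hℓ hα hα2).sub continuousOn_const
  · exact continuousOn_const.mul (contS_tan hℓ hα hα2)
  · intro θ hθ
    simpa using tan_ne hℓ hα hα2 hθ

lemma cont_brk1 : ContinuousOn (fun θ => brk1 ℓ α θ) (Sset ℓ α) := by
  apply ContinuousOn.div continuousOn_const
  · exact continuousOn_const.mul (contS_tan hℓ hα hα2)
  · intro θ hθ
    simpa using tan_ne hℓ hα hα2 hθ

lemma sin_sub_pos {θ : ℝ} (hθ : θ ∈ Sset ℓ α) : 0 < Real.sin (θ - α) := by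
  have G := mem_good hℓ hα hα2 hθ
  have hαθ : α < θ := by
    by_contra h
    push_neg at h
    have h1 : Real.tan θ ≤ Real.tan α := by
      rcases eq_or_lt_of_le h with h' | h'
      · rw [h']
      · exact (Real.tan_lt_tan_of_lt_of_lt_pi_div_two (by
          have := theta_pos hℓ hα hα2 hθ; linarith [Real.pi_pos]) hα2 h').le
    have := G.hT; have := G.hl; linarith
  apply Real.sin_pos_of_pos_of_lt_pi (by linarith)
  have := hθ.2; linarith [Real.pi_pos]

lemma cont_Lam : ContinuousOn (fun θ => Lam α θ) (Sset ℓ α) := by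
  apply ContinuousOn.div
  · exact (Real.continuous_sin.comp (continuous_id.add continuous_const)).continuousOn
  · exact (Real.continuous_sin.comp (continuous_id.sub continuous_const)).continuousOn
  · exact fun θ hθ => (sin_sub_pos hℓ hα hα2 hθ).ne'

lemma cont_uu : ContinuousOn (fun p : ℝ × ℝ => uu ℓ α p.1 p.2) ((Sset ℓ α) ×ˢ univ) := by
  have h1 : ContinuousOn (fun p : ℝ × ℝ => brk1 ℓ α p.1) ((Sset ℓ α) ×ˢ univ) :=
    (cont_brk1 hℓ hα hα2).comp continuous_fst.continuousOn (fun p hp => hp.1)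
  have h2 : ContinuousOn (fun p : ℝ × ℝ => (Lam α p.1)⁻¹) ((Sset ℓ α) ×ˢ univ) := by
    apply ContinuousOn.inv₀
    · exact (cont_Lam hℓ hα hα2).comp continuous_fst.continuousOn (fun p hp => hp.1)
    · exact fun p hp => (mem_good hℓ hα hα2 hp.1).hLam0.ne'
  exact (h1.neg).add (h2.mul (continuous_snd.continuousOn.sub h1))

lemma cont_vv : ContinuousOn (fun p : ℝ × ℝ => vv ℓ α p.1 p.2) ((Sset ℓ α) ×ˢ univ) := by
  have h0 : ContinuousOn (fun p : ℝ × ℝ => brk0 ℓ p.1) ((Sset ℓ α) ×ˢ univ) :=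
    (cont_brk0 hℓ hα hα2).comp continuous_fst.continuousOn (fun p hp => hp.1)
  have h2 : ContinuousOn (fun p : ℝ × ℝ => Lam α p.1) ((Sset ℓ α) ×ˢ univ) :=
    (cont_Lam hℓ hα hα2).comp continuous_fst.continuousOn (fun p hp => hp.1)
  exact (continuousOn_const.sub h0).add (h2.mul (continuous_snd.continuousOn.sub h0))

lemma cont_Ftrap0 : ContinuousOn (fun p : ℝ × ℝ => Ftrap0 ℓ α p.1 p.2) ((Sset ℓ α) ×ˢ univ) := by
  apply ContinuousOn.congr
    (fun p hp => ((cont_uu hℓ hα hα2) p hp).max ((cont_vv hℓ hα hα2) p hp))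
  intro p hp
  exact (mem_good hℓ hα hα2 hp.1).Ftrap0_eq p.2

lemma isOpenS : IsOpen (Sset ℓ α) := isOpen_Ioo

lemma cont_Ftrap : ContinuousOn (fun p : ℝ × ℝ => Ftrap ℓ α p.1 p.2) ((Sset ℓ α) ×ˢ univ) := by
  intro p₀ hp₀
  obtain ⟨θ₀, x₀⟩ := p₀
  set n : ℤ := ⌈x₀ - brk1 ℓ α θ₀⌉ - 1 with hn
  have hSU : IsOpen ((Sset ℓ α) ×ˢ (univ : Set ℝ)) := (isOpenS hℓ hα hα2).prod isOpen_univ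
  have hg : ContinuousOn (fun p : ℝ × ℝ => p.2 - brk1 ℓ α p.1) ((Sset ℓ α) ×ˢ univ) :=
    continuous_snd.continuousOn.sub
      ((cont_brk1 hℓ hα hα2).comp continuous_fst.continuousOn (fun p hp => hp.1))
  set W : Set (ℝ × ℝ) := ((Sset ℓ α) ×ˢ univ) ∩
      ((fun p : ℝ × ℝ => p.2 - brk1 ℓ α p.1) ⁻¹' (Set.Ioo (n : ℝ) (n + 2))) with hW
  have hWopen : IsOpen W := hg.isOpen_inter_preimage hSU isOpen_Ioo
  have hmem : (θ₀, x₀) ∈ W := by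
    refine ⟨hp₀, ?_, ?_⟩
    · have := Int.ceil_lt_add_one (x₀ - brk1 ℓ α θ₀)
      push_cast [hn]
      linarith [Int.le_ceil (x₀ - brk1 ℓ α θ₀)]
    · have := Int.le_ceil (x₀ - brk1 ℓ α θ₀)
      push_cast [hn]
      linarith [Int.ceil_lt_add_one (x₀ - brk1 ℓ α θ₀)]
  have hcongr : ∀ p ∈ W, Ftrap ℓ α p.1 p.2 =
      min (Ftrap0 ℓ α p.1 (p.2 - n) + n) (Ftrap0 ℓ α p.1 (p.2 - (n + 1)) + (n + 1)) := by
    rintro ⟨θ, x⟩ ⟨hpS, hx1, hx2⟩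
    have G := mem_good hℓ hα hα2 hpS.1
    have h1 : brk1 ℓ α θ + n < x := by simp only [Set.mem_Ioo] at hx1 hx2 ⊢; linarith
    have h2 : x < brk1 ℓ α θ + n + 2 := by
      simp only [Set.mem_Ioo] at hx1 hx2 ⊢
      have : x - brk1 ℓ α θ < n + 2 := hx2
      linarith
    exact G.Ftrap_min h1 h2
  have hcont2 : ContinuousOn
      (fun p : ℝ × ℝ => min (Ftrap0 ℓ α p.1 (p.2 - n) + n) (Ftrap0 ℓ α p.1 (p.2 - (n + 1)) + (n + 1))) W := by
    have hWsub : W ⊆ (Sset ℓ α) ×ˢ univ := Set.inter_subset_left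
    have c1 : ContinuousOn (fun p : ℝ × ℝ => Ftrap0 ℓ α p.1 (p.2 - n)) W := by
      apply (cont_Ftrap0 hℓ hα hα2).comp
        (continuous_fst.continuousOn.prodMk (continuous_snd.continuousOn.sub continuousOn_const))
      exact fun p hp => ⟨(hWsub hp).1, Set.mem_univ _⟩
    have c2 : ContinuousOn (fun p : ℝ × ℝ => Ftrap0 ℓ α p.1 (p.2 - (n + 1))) W := by
      apply (cont_Ftrap0 hℓ hα hα2).comp
        (continuous_fst.continuousOn.prodMk (continuous_snd.continuousOn.sub continuousOn_const))
      exact fun p hp => ⟨(hWsub hp).1, Set.mem_univ _⟩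
    exact fun p hp => ((c1.add continuousOn_const) p hp).min ((c2.add continuousOn_const) p hp)
  have : ContinuousOn (fun p : ℝ × ℝ => Ftrap ℓ α p.1 p.2) W := hcont2.congr hcongr
  exact ((this.continuousAt (hWopen.mem_nhds hmem)).continuousWithinAt)

lemma cont_iter (q : ℕ) : ContinuousOn (fun θ => (Ftrap ℓ α θ)^[q] 0) (Sset ℓ α) := by
  induction q with
  | zero => simpa using continuousOn_const
  | succ q ih =>
      have : (fun θ => (Ftrap ℓ α θ)^[q + 1] 0) =
          fun θ => Ftrap ℓ α θ ((Ftrap ℓ α θ)^[q] 0) := by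
        funext θ
        rw [Function.iterate_succ_apply']
      rw [this]
      exact (cont_Ftrap hℓ hα hα2).comp (continuousOn_id.prodMk ih)
        (fun θ hθ => ⟨hθ, Set.mem_univ _⟩)

end Cont

variable {ℓ α θ : ℝ}

noncomputable def mkLift (G : Good ℓ α θ) : CircleDeg1Lift where
  toFun := Ftrap ℓ α θ
  monotone' := G.Ftrap_mono
  map_add_one' := fun x => by
    have := Good.Ftrap_add_int ℓ α θ x 1
    push_cast at this
    simpa using this

@[simp] lemma mkLift_coe (G : Good ℓ α θ) : ⇑(mkLift G) = Ftrap ℓ α θ := rfl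

lemma rot_eq (G : Good ℓ α θ) :
    rotationNumber (Ftrap ℓ α θ) = (mkLift G).translationNumber := by
  apply Filter.Tendsto.limUnder_eq
  have h := (mkLift G).tendsto_translation_number₀
  have e : (fun n : ℕ => ((mkLift G) ^ n) 0 / (n : ℝ))
      = fun n : ℕ => (Ftrap ℓ α θ)^[n] 0 / (n : ℝ) := by
    funext n
    rw [CircleDeg1Lift.coe_pow]
    rfl
  rwa [e] at h

lemma rot_le (G : Good ℓ α θ) {p : ℤ} {q : ℕ} (hq : 0 < q)
    (h : (Ftrap ℓ α θ)^[q] 0 ≤ (p : ℝ)) :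
    rotationNumber (Ftrap ℓ α θ) ≤ (p : ℝ) / q := by
  rw [rot_eq G]
  set f := mkLift G
  have h0 : (f ^ q) 0 ≤ (0 : ℝ) + p := by
    rw [CircleDeg1Lift.coe_pow]
    simpa [f] using h
  have h1 : (f ^ q).translationNumber ≤ p :=
    (f ^ q).translationNumber_le_of_le_add_int h0
  rw [CircleDeg1Lift.translationNumber_pow] at h1
  rw [le_div_iff₀ (by positivity : (0:ℝ) < q)]
  linarith
lemma le_rot (G : Good ℓ α θ) {p : ℤ} {q : ℕ} (hq : 0 < q)
    (h : (p : ℝ) ≤ (Ftrap ℓ α θ)^[q] 0) :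
    (p : ℝ) / q ≤ rotationNumber (Ftrap ℓ α θ) := by
  rw [rot_eq G]
  set f := mkLift G
  have h0 : (0 : ℝ) + p ≤ (f ^ q) 0 := by
    rw [CircleDeg1Lift.coe_pow]
    simpa [f] using h
  have h1 : (p:ℝ) ≤ (f ^ q).translationNumber := by
    exact_mod_cast (f ^ q).le_translationNumber_of_add_int_le h0
  rw [CircleDeg1Lift.translationNumber_pow] at h1
  rw [div_le_iff₀ (by positivity : (0:ℝ) < q)]
  linarith

lemma iter_lt (G : Good ℓ α θ) {p : ℤ} {q : ℕ} (hq : 0 < q)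
    (h : rotationNumber (Ftrap ℓ α θ) < (p : ℝ) / q) :
    (Ftrap ℓ α θ)^[q] 0 < (p : ℝ) := by
  rw [rot_eq G] at h
  set f := mkLift G
  have h1 : (f ^ q).translationNumber < p := by
    rw [CircleDeg1Lift.translationNumber_pow]
    rw [lt_div_iff₀ (by positivity : (0:ℝ) < q)] at h
    linarith
  have := (f ^ q).map_lt_of_translationNumber_lt_int h1 0
  rw [CircleDeg1Lift.coe_pow] at this
  simpa [f] using this
lemma lt_iter (G : Good ℓ α θ) {p : ℤ} {q : ℕ} (hq : 0 < q)
    (h : (p : ℝ) / q < rotationNumber (Ftrap ℓ α θ)) :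
    (p : ℝ) < (Ftrap ℓ α θ)^[q] 0 := by
  rw [rot_eq G] at h
  set f := mkLift G
  have h1 : (p : ℤ) < (f ^ q).translationNumber := by
    rw [CircleDeg1Lift.translationNumber_pow]
    rw [div_lt_iff₀ (by positivity : (0:ℝ) < q)] at h
    linarith
  have := (f ^ q).lt_map_of_int_lt_translationNumber h1 0
  rw [CircleDeg1Lift.coe_pow] at this
  simpa [f] using this

end Stmt7

/-- for fixed ℓ > 0 and α ∈ (0, π/2), the rotation number
θ ↦ ρ(F_{ℓ,α,θ}) is continuous and non-increasing on
(arctan(2ℓ + tan α), π/2). -/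
theorem stmt7 (ℓ α : ℝ) (hℓ : 0 < ℓ) (hα : 0 < α) (hα2 : α < π / 2) :
    ContinuousOn (fun θ : ℝ => rotationNumber (Ftrap ℓ α θ))
      (Set.Ioo (Real.arctan (2 * ℓ + Real.tan α)) (π / 2)) ∧
    AntitoneOn (fun θ : ℝ => rotationNumber (Ftrap ℓ α θ))
      (Set.Ioo (Real.arctan (2 * ℓ + Real.tan α)) (π / 2)) := by
  have hSeq : Set.Ioo (Real.arctan (2 * ℓ + Real.tan α)) (π / 2) = Stmt7.Sset ℓ α := rfl
  constructor
  · -- continuity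
    rw [hSeq]
    intro θ₀ hθ₀
    have G₀ := Stmt7.mem_good hℓ hα hα2 hθ₀
    unfold ContinuousWithinAt
    rw [Metric.tendsto_nhds]
    intro ε hε
    set ρ := rotationNumber (Ftrap ℓ α θ₀) with hρ
    obtain ⟨r, hr1, hr2⟩ := exists_rat_btwn (show ρ < ρ + ε by linarith)
    obtain ⟨s, hs1, hs2⟩ := exists_rat_btwn (show ρ - ε < ρ by linarith)
    have hrden : 0 < r.den := r.pos
    have hsden : 0 < s.den := s.pos
    have hrcast : (r : ℝ) = (r.num : ℝ) / (r.den : ℝ) := by rw [Rat.cast_def]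
    have hscast : (s : ℝ) = (s.num : ℝ) / (s.den : ℝ) := by rw [Rat.cast_def]
    have hiter_r : (Ftrap ℓ α θ₀)^[r.den] 0 < (r.num : ℝ) :=
      Stmt7.iter_lt G₀ hrden (by rw [← hrcast]; exact hr1)
    have hiter_s : (s.num : ℝ) < (Ftrap ℓ α θ₀)^[s.den] 0 :=
      Stmt7.lt_iter G₀ hsden (by rw [← hscast]; exact hs2)
    have hcont_r := (Stmt7.cont_iter hℓ hα hα2 r.den θ₀ hθ₀)
    have hcont_s := (Stmt7.cont_iter hℓ hα hα2 s.den θ₀ hθ₀)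
    have hev_r : ∀ᶠ θ in nhdsWithin θ₀ (Stmt7.Sset ℓ α),
        (Ftrap ℓ α θ)^[r.den] 0 < (r.num : ℝ) := hcont_r.eventually_lt_const hiter_r
    have hev_s : ∀ᶠ θ in nhdsWithin θ₀ (Stmt7.Sset ℓ α),
        (s.num : ℝ) < (Ftrap ℓ α θ)^[s.den] 0 := hcont_s.eventually_const_lt hiter_s
    have hev_m : ∀ᶠ θ in nhdsWithin θ₀ (Stmt7.Sset ℓ α), θ ∈ Stmt7.Sset ℓ α :=
      eventually_mem_nhdsWithin
    filter_upwards [hev_r, hev_s, hev_m] with θ h1 h2 h3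
    have G := Stmt7.mem_good hℓ hα hα2 h3
    have hub : rotationNumber (Ftrap ℓ α θ) ≤ (r : ℝ) := by
      rw [hrcast]; exact Stmt7.rot_le G hrden h1.le
    have hlb : (s : ℝ) ≤ rotationNumber (Ftrap ℓ α θ) := by
      rw [hscast]; exact Stmt7.le_rot G hsden h2.le
    rw [Real.dist_eq, abs_lt]
    constructor <;> linarith
  · -- antitone
    rw [hSeq]
    intro θ hθ θ' hθ' hle
    have G := Stmt7.mem_good hℓ hα hα2 hθ
    have G' := Stmt7.mem_good hℓ hα hα2 hθ'
    have htan : Real.tan θ ≤ Real.tan θ' := by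
      rcases eq_or_lt_of_le hle with h | h
      · rw [h]
      · have h0 : -(π/2) < θ := by
          have := Stmt7.theta_pos hℓ hα hα2 hθ; linarith [Real.pi_pos]
        exact (Real.tan_lt_tan_of_lt_of_lt_pi_div_two h0 hθ'.2 h).le
    show rotationNumber (Ftrap ℓ α θ') ≤ rotationNumber (Ftrap ℓ α θ)
    rw [Stmt7.rot_eq G, Stmt7.rot_eq G']
    apply CircleDeg1Lift.translationNumber_mono
    intro x
    exact Stmt7.Ftrap_anti_pt G G' htan x
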